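/- Let t be a positive integer and let x be a real number with |x| ≤ 1/2. Then |arcsin(x) − Σ_{ℓ=0}^{t−1} ( (binomial(2ℓ, ℓ)/4^ℓ) · x^{2ℓ+1}/(2ℓ+1) )| ≤ 2^{−(2t+1)}. -/

import Mathlib

open Set Finset


noncomputable def amc (ℓ : ℕ) : ℝ := (Nat.choose (2*ℓ) ℓ : ℝ) / 4 ^ ℓ

lemma amc_zero : amc 0 = 1 := by simp [amc]

lemma amc_nonneg (ℓ : ℕ) : 0 ≤ amc ℓ := by unfold amc; positivity

lemma amc_le_one (ℓ : ℕ) : amc ℓ ≤ 1 := by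
  have h : (Nat.choose (2*ℓ) ℓ : ℝ) ≤ 4 ^ ℓ := by
    exact_mod_cast le_trans (Nat.choose_le_choose ℓ (Nat.le_succ _)) (Nat.choose_middle_le_pow ℓ)
  rw [amc, div_le_one (by positivity)]; exact h

lemma amc_rec (ℓ : ℕ) : (2*(ℓ+1) : ℝ) * amc (ℓ+1) = (2*ℓ+1) * amc ℓ := by
  have h := Nat.succ_mul_centralBinom_succ ℓ
  have h' : ((ℓ:ℝ)+1) * (Nat.choose (2*(ℓ+1)) (ℓ+1) : ℝ)
      = 2 * (2*ℓ+1) * (Nat.choose (2*ℓ) ℓ : ℝ) := by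
    exact_mod_cast congrArg (Nat.cast : ℕ → ℝ) h
  have h4 : (4:ℝ) ^ (ℓ+1) = 4 * 4 ^ ℓ := by ring
  rw [amc, amc, h4]
  field_simp
  nlinarith [h', pow_pos (by norm_num : (0:ℝ) < 4) ℓ]

lemma am_summable_S {u : ℝ} (hu : |u| ≤ 1/2) : Summable (fun ℓ => amc ℓ * u ^ ℓ) := by
  apply Summable.of_norm_bounded (g := fun ℓ => (1/2:ℝ)^ℓ)
    (summable_geometric_of_lt_one (by norm_num) (by norm_num))
  intro ℓ
  rw [norm_mul, norm_pow]
  calc ‖amc ℓ‖ * ‖u‖^ℓ ≤ 1 * (1/2)^ℓ := by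
        apply mul_le_mul _ (pow_le_pow_left₀ (norm_nonneg u) hu ℓ) (by positivity) (by norm_num)
        rw [Real.norm_eq_abs, abs_of_nonneg (amc_nonneg ℓ)]; exact amc_le_one ℓ
    _ = (1/2)^ℓ := one_mul _

lemma am_summable_A {u : ℝ} (hu : |u| ≤ 1/2) : Summable (fun ℓ => amc ℓ * (ℓ * u ^ ℓ)) := by
  apply Summable.of_norm_bounded (g := fun ℓ : ℕ => (ℓ:ℝ)^1 * (1/2:ℝ)^ℓ)
    (summable_pow_mul_geometric_of_norm_lt_one (R := ℝ) 1 (by rw [Real.norm_eq_abs]; rw [abs_of_nonneg]; norm_num; norm_num))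
  intro ℓ
  rw [norm_mul, norm_mul, norm_pow, pow_one, Real.norm_natCast]
  calc ‖amc ℓ‖ * ((ℓ:ℝ) * ‖u‖^ℓ) ≤ 1 * ((ℓ:ℝ) * (1/2)^ℓ) := by
        apply mul_le_mul _ _ (by positivity) (by norm_num)
        · rw [Real.norm_eq_abs, abs_of_nonneg (amc_nonneg ℓ)]; exact amc_le_one ℓ
        · exact mul_le_mul_of_nonneg_left (pow_le_pow_left₀ (norm_nonneg u) hu ℓ) (by positivity)
    _ = (ℓ:ℝ) * (1/2)^ℓ := one_mul _

lemma am_bound_D {u : ℝ} (hu : |u| ≤ 1/2) (ℓ : ℕ) :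
    ‖amc ℓ * (ℓ * u ^ (ℓ-1))‖ ≤ 2 * ((ℓ:ℝ)^1 * (1/2:ℝ)^ℓ) := by
  rw [norm_mul, norm_mul, norm_pow, Real.norm_natCast, pow_one]
  have h1 : ‖amc ℓ‖ ≤ 1 := by
    rw [Real.norm_eq_abs, abs_of_nonneg (amc_nonneg ℓ)]; exact amc_le_one ℓ
  have h2 : ‖u‖^(ℓ-1) ≤ (1/2:ℝ)^(ℓ-1) := pow_le_pow_left₀ (norm_nonneg u) hu _
  calc ‖amc ℓ‖ * ((ℓ:ℝ) * ‖u‖^(ℓ-1)) ≤ 1 * ((ℓ:ℝ) * (1/2)^(ℓ-1)) := by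
        apply mul_le_mul h1 _ (by positivity) (by norm_num)
        exact mul_le_mul_of_nonneg_left h2 (by positivity)
    _ = (ℓ:ℝ) * (1/2)^(ℓ-1) := one_mul _
    _ ≤ 2 * ((ℓ:ℝ) * (1/2)^ℓ) := by
        cases ℓ with
        | zero => simp
        | succ k =>
          refine le_of_eq ?_
          rw [Nat.add_sub_cancel, pow_succ]; push_cast; ring

lemma am_summable_D {u : ℝ} (hu : |u| ≤ 1/2) : Summable (fun ℓ => amc ℓ * (ℓ * u ^ (ℓ-1))) := by
  apply Summable.of_norm_bounded (g := fun ℓ : ℕ => 2 * ((ℓ:ℝ)^1 * (1/2:ℝ)^ℓ))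
    ((summable_pow_mul_geometric_of_norm_lt_one (R := ℝ) 1 (by rw [Real.norm_eq_abs]; rw [abs_of_nonneg]; norm_num; norm_num)).mul_left 2)
  exact am_bound_D hu

noncomputable def amS (u : ℝ) : ℝ := ∑' ℓ, amc ℓ * u ^ ℓ

lemma amS_hasDerivAt {u : ℝ} (hu : u ∈ Ioo (-(1/2):ℝ) (1/2)) :
    HasDerivAt amS (∑' ℓ, amc ℓ * ((ℓ:ℝ) * u ^ (ℓ-1))) u := by
  show HasDerivAt (fun z => ∑' ℓ, amc ℓ * z ^ ℓ) _ u
  apply hasDerivAt_tsum_of_isPreconnected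
    (u := fun ℓ : ℕ => 2 * ((ℓ:ℝ)^1 * (1/2:ℝ)^ℓ))
    (g := fun (n : ℕ) (z : ℝ) => amc n * z ^ n)
    (g' := fun (n : ℕ) (y : ℝ) => amc n * ((n:ℝ) * y ^ (n-1)))
    (t := Ioo (-(1/2):ℝ) (1/2)) (y₀ := 0)
  · exact (summable_pow_mul_geometric_of_norm_lt_one (R := ℝ) 1
      (by rw [Real.norm_eq_abs, abs_of_nonneg]; norm_num; norm_num)).mul_left 2
  · exact isOpen_Ioo
  · exact (convex_Ioo _ _).isPreconnected
  · intro n y _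
    simpa using (hasDerivAt_pow n y).const_mul (amc n)
  · intro n y hy
    exact am_bound_D (by rw [abs_le]; constructor <;> linarith [hy.1, hy.2]) n
  · constructor <;> norm_num
  · exact am_summable_S (by norm_num)
  · exact hu

lemma am_key {u : ℝ} (hu : |u| ≤ 1/2) :
    2 * (1-u) * (∑' ℓ, amc ℓ * ((ℓ:ℝ) * u ^ (ℓ-1))) = amS u := by
  have hS := am_summable_S hu
  have hA := am_summable_A hu
  have hD := am_summable_D hu
  set D := ∑' ℓ, amc ℓ * ((ℓ:ℝ) * u ^ (ℓ-1)) with hDdef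
  set A := ∑' ℓ, amc ℓ * ((ℓ:ℝ) * u ^ ℓ) with hAdef
  have step1 : u * D = A := by
    rw [hDdef, ← tsum_mul_left]
    apply tsum_congr
    intro ℓ
    cases ℓ with
    | zero => simp
    | succ k => rw [Nat.add_sub_cancel]; push_cast; ring
  have hshift : Summable (fun ℓ => amc (ℓ+1) * (((ℓ:ℝ)+1) * u ^ ℓ)) := by
    apply Summable.congr (hD.comp_injective (add_left_injective 1))
    intro ℓ
    simp only [Function.comp_apply, Nat.add_sub_cancel]
    push_cast; ring
  have step0 : D = ∑' ℓ, amc (ℓ+1) * (((ℓ:ℝ)+1) * u ^ ℓ) := by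
    rw [hDdef, hD.tsum_eq_zero_add]
    simp [Nat.add_sub_cancel]
  have step2 : 2 * D = 2 * A + amS u := by
    rw [step0, ← tsum_mul_left]
    have e1 : ∀ ℓ : ℕ, 2 * (amc (ℓ+1) * (((ℓ:ℝ)+1) * u ^ ℓ))
        = 2 * (amc ℓ * ((ℓ:ℝ) * u ^ ℓ)) + amc ℓ * u ^ ℓ := by
      intro ℓ
      have h := amc_rec ℓ
      linear_combination h * u ^ ℓ
    calc (∑' ℓ, 2 * (amc (ℓ+1) * (((ℓ:ℝ)+1) * u ^ ℓ)))
        = ∑' ℓ, (2 * (amc ℓ * ((ℓ:ℝ) * u ^ ℓ)) + amc ℓ * u ^ ℓ) := tsum_congr e1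
      _ = 2 * A + amS u := by
          rw [Summable.tsum_add (hA.mul_left 2) hS, tsum_mul_left]; rfl
  have : 2 * (1-u) * D = 2 * D - 2 * (u * D) := by ring
  rw [this, step1, step2]; ring

lemma amh_hasDerivAt {y : ℝ} (hy : y ∈ Ioo (-(1/2):ℝ) (1/2)) :
    HasDerivAt (fun z => amS z * Real.sqrt (1 - z)) 0 y := by
  have hy1 : (0:ℝ) < 1 - y := by linarith [hy.2]
  have hsq : Real.sqrt (1 - y) > 0 := Real.sqrt_pos.mpr hy1
  have hS := amS_hasDerivAt hy
  have hR : HasDerivAt (fun z : ℝ => Real.sqrt (1 - z)) (-(1 / (2 * Real.sqrt (1 - y)))) y := by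
    have h1 : HasDerivAt (fun z : ℝ => 1 - z) (-1) y := by
      simpa using (hasDerivAt_id y).const_sub 1
    have := (Real.hasDerivAt_sqrt hy1.ne').comp y h1
    refine this.congr_deriv ?_; ring
  have hmul := hS.mul hR
  refine hmul.congr_deriv (Eq.symm ?_)
  have hk := am_key (u := y) (by rw [abs_le]; constructor <;> linarith [hy.1, hy.2])
  set D := ∑' ℓ, amc ℓ * ((ℓ:ℝ) * y ^ (ℓ-1))
  have hsq2 : Real.sqrt (1 - y) ^ 2 = 1 - y := Real.sq_sqrt hy1.le
  rw [← hk, ← hsq2]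
  field_simp
  rw [Real.sqrt_sq hsq.le]
  ring

lemma amS_zero : amS 0 = 1 := by
  rw [amS, tsum_eq_single 0]
  · simpa using amc_zero
  · intro b hb
    cases b with
    | zero => exact absurd rfl hb
    | succ k => simp

lemma amS_eq {u : ℝ} (hu : u ∈ Icc (0:ℝ) (1/4)) : amS u = 1 / Real.sqrt (1 - u) := by
  have hu1 : (0:ℝ) < 1 - u := by linarith [hu.2]
  have hsq : Real.sqrt (1 - u) > 0 := Real.sqrt_pos.mpr hu1
  have hval : amS u * Real.sqrt (1 - u) = 1 := by
    rcases eq_or_lt_of_le hu.1 with h0 | h0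
    · rw [← h0]; simp [amS_zero]
    · have hsub : Icc (0:ℝ) u ⊆ Ioo (-(1/2):ℝ) (1/2) := by
        intro z hz
        constructor <;> [linarith [hz.1]; linarith [hz.2, hu.2]]
      obtain ⟨c, hc, hc2⟩ := exists_hasDerivAt_eq_slope
        (fun z => amS z * Real.sqrt (1 - z)) (fun _ => 0) h0
        (fun z hz => (amh_hasDerivAt (hsub hz)).continuousAt.continuousWithinAt)
        (fun z hz => amh_hasDerivAt (hsub ⟨hz.1.le, hz.2.le⟩))
      have : (0:ℝ) = (amS u * Real.sqrt (1 - u) - amS 0 * Real.sqrt (1 - 0)) / (u - 0) := hc2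
      field_simp at this
      rw [amS_zero] at this
      simp only [sub_zero, Real.sqrt_one] at this
      linarith
  field_simp
  linarith [hval]

noncomputable def amT (t : ℕ) (s : ℝ) : ℝ := ∑' ℓ, amc (ℓ+t) * (s^2) ^ (ℓ+t)

lemma amT_summable (t : ℕ) {s : ℝ} (hs : |s| ≤ 1/2) :
    Summable (fun ℓ => amc (ℓ+t) * (s^2) ^ (ℓ+t)) := by
  have hu : |s^2| ≤ 1/2 := by
    rw [abs_of_nonneg (sq_nonneg s)]
    nlinarith [abs_nonneg s, sq_abs s, hs]
  exact (am_summable_S hu).comp_injective (add_left_injective t)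

lemma amT_nonneg (t : ℕ) {s : ℝ} (hs : |s| ≤ 1/2) : 0 ≤ amT t s :=
  tsum_nonneg fun ℓ => mul_nonneg (amc_nonneg _) (pow_nonneg (sq_nonneg s) _)

lemma amT_le (t : ℕ) {s : ℝ} (hs : |s| ≤ 1/2) : amT t s ≤ 4/3 * s ^ (2*t) := by
  have hs2 : s^2 ≤ 1/4 := by nlinarith [sq_abs s, hs, abs_nonneg s]
  have hgeo : Summable (fun ℓ : ℕ => (1/4:ℝ)^ℓ * s^(2*t)) :=
    (summable_geometric_of_lt_one (by norm_num) (by norm_num)).mul_right _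
  have hle : ∀ ℓ : ℕ, amc (ℓ+t) * (s^2) ^ (ℓ+t) ≤ (1/4:ℝ)^ℓ * s^(2*t) := by
    intro ℓ
    have h1 : amc (ℓ+t) * (s^2) ^ (ℓ+t) ≤ (s^2) ^ (ℓ+t) := by
      nlinarith [amc_le_one (ℓ+t), amc_nonneg (ℓ+t), pow_nonneg (sq_nonneg s) (ℓ+t)]
    have h2 : (s^2 : ℝ) ^ (ℓ+t) = (s^2)^ℓ * s^(2*t) := by
      rw [pow_add, pow_mul]
    have h3 : (s^2 : ℝ)^ℓ ≤ (1/4:ℝ)^ℓ := pow_le_pow_left₀ (sq_nonneg s) hs2 ℓ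
    calc amc (ℓ+t) * (s^2) ^ (ℓ+t) ≤ (s^2) ^ (ℓ+t) := h1
      _ = (s^2)^ℓ * s^(2*t) := h2
      _ ≤ (1/4)^ℓ * s^(2*t) := by
          apply mul_le_mul_of_nonneg_right h3 (by rw [pow_mul]; exact pow_nonneg (sq_nonneg s) t)
  calc amT t s ≤ ∑' ℓ, (1/4:ℝ)^ℓ * s^(2*t) := Summable.tsum_le_tsum hle (amT_summable t hs) hgeo
    _ = (∑' ℓ, (1/4:ℝ)^ℓ) * s^(2*t) := tsum_mul_right
    _ = 4/3 * s^(2*t) := by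
        rw [tsum_geometric_of_lt_one (by norm_num) (by norm_num)]; norm_num

lemma amF_hasDerivAt (t : ℕ) {s : ℝ} (hs : s ∈ Ioo (-(1/2):ℝ) (1/2)) :
    HasDerivAt (fun z => Real.arcsin z
      - ∑ ℓ ∈ Finset.range t, amc ℓ * z ^ (2*ℓ+1) / (2*ℓ+1 : ℝ)) (amT t s) s := by
  have hs' : |s| ≤ 1/2 := by rw [abs_le]; exact ⟨hs.1.le, hs.2.le⟩
  have ha : HasDerivAt Real.arcsin (1 / Real.sqrt (1 - s^2)) s :=
    Real.hasDerivAt_arcsin (by intro h; rw [h] at hs; norm_num at hs)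
      (by intro h; rw [h] at hs; norm_num at hs)
  have hp : HasDerivAt (fun z : ℝ => ∑ ℓ ∈ Finset.range t, amc ℓ * z ^ (2*ℓ+1) / (2*ℓ+1 : ℝ))
      (∑ ℓ ∈ Finset.range t, amc ℓ * s ^ (2*ℓ)) s := by
    apply HasDerivAt.fun_sum
    intro ℓ _
    have h21 : ((2:ℝ)*ℓ+1) ≠ 0 := by positivity
    have hd := (hasDerivAt_pow (2*ℓ+1) s).const_mul (amc ℓ / (2*ℓ+1 : ℝ))
    have hfun : (fun z : ℝ => amc ℓ / (2*ℓ+1 : ℝ) * z ^ (2*ℓ+1))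
        = (fun z : ℝ => amc ℓ * z ^ (2*ℓ+1) / (2*ℓ+1 : ℝ)) := by
      funext z; ring
    rw [hfun] at hd
    refine hd.congr_deriv ?_
    push_cast [Nat.add_sub_cancel]
    field_simp
  have key : 1 / Real.sqrt (1 - s^2) - ∑ ℓ ∈ Finset.range t, amc ℓ * s ^ (2*ℓ) = amT t s := by
    have hu : s^2 ∈ Icc (0:ℝ) (1/4) := by
      constructor
      · positivity
      · nlinarith [sq_abs s, hs', abs_nonneg s]
    have hsum : Summable (fun ℓ => amc ℓ * (s^2) ^ ℓ) := by
      apply am_summable_S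
      rw [abs_of_nonneg (sq_nonneg s)]; linarith [hu.2]
    have hsplit := Summable.sum_add_tsum_nat_add (f := fun ℓ => amc ℓ * (s^2) ^ ℓ) t hsum
    have hS : amS (s^2) = 1 / Real.sqrt (1 - s^2) := by
      rw [amS_eq hu]
    have hpow : ∀ ℓ, amc ℓ * s ^ (2*ℓ) = amc ℓ * (s^2) ^ ℓ := by
      intro ℓ; rw [pow_mul]
    calc 1 / Real.sqrt (1 - s^2) - ∑ ℓ ∈ Finset.range t, amc ℓ * s ^ (2*ℓ)
        = amS (s^2) - ∑ ℓ ∈ Finset.range t, amc ℓ * (s^2) ^ ℓ := by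
          rw [hS]; congr 1; exact Finset.sum_congr rfl fun ℓ _ => hpow ℓ
      _ = amT t s := by rw [amT, amS, ← hsplit]; ring
  rw [← key]
  exact ha.sub hp

lemma am_main (t : ℕ) (ht : 0 < t) {x : ℝ} (hx0 : 0 ≤ x) (hx : x ≤ 1/2) :
    |Real.arcsin x - ∑ ℓ ∈ Finset.range t, amc ℓ * x ^ (2*ℓ+1) / (2*ℓ+1 : ℝ)|
      ≤ 1 / 2 ^ (2*t+1) := by
  set F : ℝ → ℝ := fun z => Real.arcsin z
      - ∑ ℓ ∈ Finset.range t, amc ℓ * z ^ (2*ℓ+1) / (2*ℓ+1 : ℝ) with hF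
  have hFcont : Continuous F := by
    apply Real.continuous_arcsin.sub
    exact continuous_finset_sum _ fun i _ => (continuous_const.mul (continuous_pow (2*i+1))).div_const _
  have hF0 : F 0 = 0 := by
    simp [hF, Real.arcsin_zero]
  rcases eq_or_lt_of_le hx0 with h0 | h0
  · rw [← h0]
    have : Real.arcsin 0 - ∑ ℓ ∈ Finset.range t, amc ℓ * (0:ℝ) ^ (2*ℓ+1) / (2*ℓ+1 : ℝ) = 0 := hF0
    rw [this, abs_zero]; positivity
  · have hsub : ∀ z ∈ Ioo (0:ℝ) x, z ∈ Ioo (-(1/2):ℝ) (1/2) := by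
      intro z hz; exact ⟨by linarith [hz.1], by linarith [hz.2, hx]⟩
    have habs : ∀ z ∈ Ioo (0:ℝ) x, |z| ≤ 1/2 := by
      intro z hz; rw [abs_le]; exact ⟨by linarith [hz.1], by linarith [hz.2, hx]⟩
    -- lower bound : 0 ≤ F x
    obtain ⟨c, hc, hc2⟩ := exists_hasDerivAt_eq_slope F (fun z => amT t z) h0
      hFcont.continuousOn (fun z hz => amF_hasDerivAt t (hsub z hz))
    have hlow : 0 ≤ F x := by
      have h1 : 0 ≤ amT t c := amT_nonneg t (habs c hc)
      rw [hc2, hF0] at h1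
      simp only [sub_zero] at h1
      have h2 := mul_nonneg h1 (le_of_lt h0)
      rwa [div_mul_cancel₀ _ (ne_of_gt h0)] at h2
    -- upper bound
    set G : ℝ → ℝ := fun z => (4/3/(2*t+1 : ℝ)) * z ^ (2*t+1) - F z with hG
    have h21 : ((2:ℝ)*t+1) ≠ 0 := by positivity
    have hGd : ∀ z ∈ Ioo (0:ℝ) x, HasDerivAt G (4/3 * z ^ (2*t) - amT t z) z := by
      intro z hz
      have hp := (hasDerivAt_pow (2*t+1) z).const_mul ((4:ℝ)/3/(2*t+1 : ℝ))
      have hval : ((4:ℝ)/3/(2*t+1 : ℝ)) * (((2*t+1 : ℕ)):ℝ) * z ^ (2*t+1-1) = 4/3 * z ^ (2*t) := by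
        push_cast [Nat.add_sub_cancel]
        field_simp
      have := hp.sub (amF_hasDerivAt t (hsub z hz))
      refine this.congr_deriv ?_
      rw [← hval]; ring
    obtain ⟨d, hd, hd2⟩ := exists_hasDerivAt_eq_slope G (fun z => 4/3 * z ^ (2*t) - amT t z) h0
      (((continuous_const.mul (continuous_pow (2*t+1))).sub hFcont).continuousOn) hGd
    have hhigh : F x ≤ (4/3/(2*t+1 : ℝ)) * x ^ (2*t+1) := by
      have h1 : 0 ≤ 4/3 * d ^ (2*t) - amT t d := by
        have := amT_le t (habs d hd)
        linarith
      rw [hd2] at h1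
      have hG0 : G 0 = 0 := by simp [hG, hF0, pow_succ]
      rw [hG0] at h1
      simp only [sub_zero] at h1
      have h2 := mul_nonneg h1 (le_of_lt h0)
      rw [div_mul_cancel₀ _ (ne_of_gt h0)] at h2
      simp only [hG] at h2
      linarith
    -- arithmetic
    have hxp : x ^ (2*t+1) ≤ (1/2:ℝ) ^ (2*t+1) := pow_le_pow_left₀ hx0 hx _
    have ht3 : (3:ℝ) ≤ 2*t+1 := by
      have : (1:ℝ) ≤ t := by exact_mod_cast ht
      linarith
    have hcoef : (4:ℝ)/3/(2*t+1 : ℝ) ≤ 4/9 := by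
      rw [div_le_div_iff₀ (by positivity) (by norm_num)]
      linarith
    have hfinal : (4/3/(2*t+1 : ℝ)) * x ^ (2*t+1) ≤ 1 / 2 ^ (2*t+1) := by
      calc (4/3/(2*t+1 : ℝ)) * x ^ (2*t+1) ≤ (4/9) * (1/2:ℝ)^(2*t+1) := by
            apply mul_le_mul hcoef hxp (by positivity) (by norm_num)
        _ ≤ (1/2:ℝ)^(2*t+1) := by nlinarith [pow_nonneg (by norm_num : (0:ℝ) ≤ 1/2) (2*t+1)]
        _ = 1 / 2 ^ (2*t+1) := by rw [div_pow, one_pow]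
    rw [abs_of_nonneg hlow]
    linarith

/-- The degree-(2t−1) Maclaurin truncation of arcsin approximates arcsin(x)
to within 2^{−(2t+1)} for |x| ≤ 1/2. -/
theorem arcsin_maclaurin_truncation_bound
    (t : ℕ) (ht : 0 < t) (x : ℝ) (hx : |x| ≤ 1/2) :
    |Real.arcsin x - ∑ ℓ ∈ Finset.range t,
        ((Nat.choose (2*ℓ) ℓ : ℝ) / 4 ^ ℓ) * x ^ (2*ℓ+1) / (2*ℓ+1 : ℝ)|
      ≤ 1 / 2 ^ (2*t+1) := by
  have hrw : ∀ y : ℝ, ∑ ℓ ∈ Finset.range t,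
      ((Nat.choose (2*ℓ) ℓ : ℝ) / 4 ^ ℓ) * y ^ (2*ℓ+1) / (2*ℓ+1 : ℝ)
      = ∑ ℓ ∈ Finset.range t, amc ℓ * y ^ (2*ℓ+1) / (2*ℓ+1 : ℝ) := by
    intro y; rfl
  rw [hrw]
  rcases le_or_gt 0 x with h0 | h0
  · exact am_main t ht h0 (by rwa [abs_of_nonneg h0] at hx)
  · have hx' : 0 ≤ -x := by linarith
    have hx2 : -x ≤ 1/2 := by rwa [abs_of_neg h0] at hx
    have hodd : Real.arcsin x - ∑ ℓ ∈ Finset.range t, amc ℓ * x ^ (2*ℓ+1) / (2*ℓ+1 : ℝ)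
        = -(Real.arcsin (-x) - ∑ ℓ ∈ Finset.range t, amc ℓ * (-x) ^ (2*ℓ+1) / (2*ℓ+1 : ℝ)) := by
      rw [Real.arcsin_neg]
      have hsum : ∑ ℓ ∈ Finset.range t, amc ℓ * (-x) ^ (2*ℓ+1) / (2*ℓ+1 : ℝ)
          = -∑ ℓ ∈ Finset.range t, amc ℓ * x ^ (2*ℓ+1) / (2*ℓ+1 : ℝ) := by
        rw [← Finset.sum_neg_distrib]
        apply Finset.sum_congr rfl
        intro ℓ _
        rw [Odd.neg_pow ⟨ℓ, by ring⟩]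
        ring
      rw [hsum]
      ring
    rw [hodd, abs_neg]
    exact am_main t ht hx' hx2
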